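/- Let u, v ∈ K with u ≠ v, v − u + ω_0/2 − 1 ≠ 0 and u − v + ω_0/2 − 1 ≠ 0, and for 1 ≤ i ≤ n−1 set S_i(u,v) := S_i + (1/(v − u))·1 − (1/(v − u + ω_0/2 − 1))·E_i in the cyclotomic Nazarov–Wenzl algebra W_{d,n}. Then S_i(u,v)·S_i(v,u) = ((u − v + 1)(u − v − 1)/(u − v)²)·1. -/

import Mathlib

open scoped BigOperators

/-- The cyclotomic Nazarov–Wenzl algebra data: elements of a `K`-algebra `A` satisfying
the defining relations of `W_{d,n}`. -/
structure CNW (K : Type*) [Field K] (A : Type*) [Ring A] [Algebra K A]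
    (d n : ℕ) (ω : ℕ → K) (v : Fin d → K) where
  S : ℕ → A
  E : ℕ → A
  X : ℕ → A
  two_ne : (2 : K) ≠ 0
  Ssq : ∀ i, 1 ≤ i → i ≤ n - 1 → S i * S i = 1
  Esq : ∀ i, 1 ≤ i → i ≤ n - 1 → E i * E i = ω 0 • E i
  braid : ∀ i, 1 ≤ i → i + 1 ≤ n - 1 → S i * S (i + 1) * S i = S (i + 1) * S i * S (i + 1)
  Scomm : ∀ i j, 1 ≤ i → j ≤ n - 1 → i + 2 ≤ j → S i * S j = S j * S i
  SXcomm : ∀ i j, 1 ≤ i → i ≤ n - 1 → 1 ≤ j → j ≤ n → j ≠ i → j ≠ i + 1 →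
    S i * X j = X j * S i
  EEEup : ∀ i, 1 ≤ i → i + 1 ≤ n - 1 → E i * E (i + 1) * E i = E i
  EEEdown : ∀ i, 1 ≤ i → i + 1 ≤ n - 1 → E (i + 1) * E i * E (i + 1) = E (i + 1)
  SSEup : ∀ i, 1 ≤ i → i + 1 ≤ n - 1 → S i * S (i + 1) * E i = E (i + 1) * E i
  SSEdown : ∀ i, 1 ≤ i → i + 1 ≤ n - 1 → S (i + 1) * S i * E (i + 1) = E i * E (i + 1)
  ESSup : ∀ i, 1 ≤ i → i + 1 ≤ n - 1 → E i * S (i + 1) * S i = E i * E (i + 1)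
  ESSdown : ∀ i, 1 ≤ i → i + 1 ≤ n - 1 → E (i + 1) * S i * S (i + 1) = E (i + 1) * E i
  EXE : ∀ k, 1 ≤ k → k ≤ d - 1 → E 1 * X 1 ^ k * E 1 = ω k • E 1
  SE : ∀ i, 1 ≤ i → i ≤ n - 1 → S i * E i = E i
  ES : ∀ i, 1 ≤ i → i ≤ n - 1 → E i * S i = E i
  skein : ∀ i, 1 ≤ i → i ≤ n - 1 → S i * X i - X (i + 1) * S i = E i - 1
  antisymL : ∀ i, 1 ≤ i → i ≤ n - 1 → E i * (X i + X (i + 1)) = 0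
  antisymR : ∀ i, 1 ≤ i → i ≤ n - 1 → (X i + X (i + 1)) * E i = 0
  SEcomm : ∀ i j, 1 ≤ i → j ≤ n - 1 → i + 2 ≤ j → S i * E j = E j * S i
  EScomm : ∀ i j, 1 ≤ i → j ≤ n - 1 → i + 2 ≤ j → E i * S j = S j * E i
  EEcomm : ∀ i j, 1 ≤ i → j ≤ n - 1 → i + 2 ≤ j → E i * E j = E j * E i
  EXcomm : ∀ i j, 1 ≤ i → i ≤ n - 1 → 1 ≤ j → j ≤ n → j ≠ i → j ≠ i + 1 →
    E i * X j = X j * E i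
  XXcomm : ∀ i j, 1 ≤ i → i ≤ n → 1 ≤ j → j ≤ n → X i * X j = X j * X i
  cyclo : (List.ofFn fun i : Fin d => X 1 - algebraMap K A (v i)).prod = 0

private lemma cnw_aux_e {K : Type*} [Field K] (u v w : K) (hvu : v - u ≠ 0) (huv : u - v ≠ 0)
    (h1 : v - u + w - 1 ≠ 0) (h2 : u - v + w - 1 ≠ 0) :
    -(1/(u-v+w-1)) - 1/(v-u+w-1) - (1/(v-u))*(1/(u-v+w-1)) - (1/(u-v))*(1/(v-u+w-1))
      + (1/(v-u+w-1))*(1/(u-v+w-1))*(2*w) = 0 := by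
  field_simp
  ring

private lemma cnw_aux_one {K : Type*} [Field K] (u v : K) (hvu : v - u ≠ 0) (huv : u - v ≠ 0) :
    1 + (1/(v-u)) * (1/(u-v)) = (u - v + 1) * (u - v - 1) / (u - v) ^ 2 := by
  field_simp
  ring

/-- the Baxterized elements `S_i(u,v)` of the cyclotomic Nazarov–Wenzl algebra
satisfy `S_i(u,v) S_i(v,u) = ((u - v + 1)(u - v - 1)/(u - v)²) · 1`. -/
theorem cnw_baxterized_inverse
    {K : Type*} [Field K] {A : Type*} [Ring A] [Algebra K A]
    {d n : ℕ} {ω : ℕ → K} {vv : Fin d → K}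
    (B : CNW K A d n ω vv)
    (i : ℕ) (hi1 : 1 ≤ i) (hin : i ≤ n - 1)
    (u v : K) (huv : u ≠ v)
    (h1 : v - u + ω 0 / 2 - 1 ≠ 0) (h2 : u - v + ω 0 / 2 - 1 ≠ 0) :
    (B.S i + (1 / (v - u)) • (1 : A) - (1 / (v - u + ω 0 / 2 - 1)) • B.E i) *
      (B.S i + (1 / (u - v)) • (1 : A) - (1 / (u - v + ω 0 / 2 - 1)) • B.E i)
      = ((u - v + 1) * (u - v - 1) / (u - v) ^ 2) • (1 : A) := by
  have hs := B.Ssq i hi1 hin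
  have hse := B.SE i hi1 hin
  have hes := B.ES i hi1 hin
  have he := B.Esq i hi1 hin
  have hvu : v - u ≠ 0 := sub_ne_zero.mpr (Ne.symm huv)
  have huv' : u - v ≠ 0 := sub_ne_zero.mpr huv
  set s := B.S i with hsdef
  set e := B.E i with hedef
  set a : K := 1 / (v - u) with ha
  set a' : K := 1 / (u - v) with ha'
  set b : K := 1 / (v - u + ω 0 / 2 - 1) with hb
  set b' : K := 1 / (u - v + ω 0 / 2 - 1) with hb'
  have expand : (s + a • (1 : A) - b • e) * (s + a' • (1 : A) - b' • e)
      = (1 + a * a') • (1 : A) + (a + a') • s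
        + (-b' - b - a * b' - a' * b + b * b' * ω 0) • e := by
    have step : (s + a • (1 : A) - b • e) * (s + a' • (1 : A) - b' • e)
        = s * s + a' • s - b' • (s * e) + a • s + (a * a') • (1 : A) - (a * b') • e
          - b • (e * s) - (b * a') • e + (b * b') • (e * e) := by
      simp only [mul_add, add_mul, sub_mul, mul_sub, smul_mul_assoc, mul_smul_comm,
        smul_add, smul_sub, one_mul, mul_one, smul_smul]
      module
    rw [step, hs, hse, hes, he, smul_smul]
    module
  rw [expand]
  have hcs : a + a' = 0 := by
    rw [ha, ha']
    field_simp
    ring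
  have hce : -b' - b - a * b' - a' * b + b * b' * ω 0 = 0 := by
    have h2w : 2 * (ω 0 / 2) = ω 0 := by
      rw [mul_comm, div_mul_cancel₀ _ B.two_ne]
    have := cnw_aux_e u v (ω 0 / 2) hvu huv' h1 h2
    rw [h2w] at this
    rw [ha, ha', hb, hb']
    linear_combination this
  have hc1 : 1 + a * a' = (u - v + 1) * (u - v - 1) / (u - v) ^ 2 :=
    cnw_aux_one u v hvu huv'
  rw [hcs, hce, hc1, zero_smul, zero_smul, add_zero, add_zero]
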